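/- The number of pairs (f,g) ∈ End^0(G) × End^0(G) such that the multigraph Γ_{f,g} is a tree equals 2^n · n! · |Aut(T)|^n · (n·|Aut(T)| + 1)^(n−1). -/

import Mathlib

/-!
STATEMENT 6: The number of pairs `(f, g) ∈ End⁰(G) × End⁰(G)` such that the
multigraph `Γ_{f,g}` is a tree equals
`2^n · n! · |Aut(T)|^n · (n·|Aut(T)| + 1)^(n-1)`.

Setting: `n ≥ 1`, `T` a nontrivial finite group, `G = Tⁿ = (Fin n → T)`.
The vertex set `{0, 1, …, n}` is modelled by `Option (Fin n)`, with `none`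
the distinguished vertex `0`.  Since `T` is nontrivial, the map `θ_f` is
uniquely determined by `f ∈ End⁰(G)`, so the condition "`Γ_{f,g}` is a tree"
is well-posed when expressed via any witnessing data.
-/

/-- Adjacency in the multigraph whose `i`-th edge has ends `ends i`. -/
def MGraph.Adj {V : Type*} {n : ℕ} (ends : Fin n → Sym2 V) (a b : V) : Prop :=
  ∃ i, ends i = s(a, b)

/-- Two vertices are joined by a walk. -/
def MGraph.Reach {V : Type*} {n : ℕ} (ends : Fin n → Sym2 V) : V → V → Prop :=
  Relation.ReflTransGen (MGraph.Adj ends)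

/-- The multigraph is connected. -/
def MGraph.Connected {V : Type*} {n : ℕ} (ends : Fin n → Sym2 V) : Prop :=
  ∀ a b : V, MGraph.Reach ends a b

/-- The multigraph has a cycle: `m + 1` pairwise distinct edges and `m + 1`
pairwise distinct vertices arranged cyclically (`m = 0` detects a loop,
`m = 1` a pair of parallel edges). -/
def MGraph.HasCycle {V : Type*} {n : ℕ} (ends : Fin n → Sym2 V) : Prop :=
  ∃ (m : ℕ) (e : Fin (m + 1) → Fin n) (v : Fin (m + 1) → V),
    Function.Injective e ∧ Function.Injective v ∧
      ∀ k : Fin (m + 1), ends (e k) = s(v k, v (k + 1))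

/-- The multigraph is a tree: connected with no cycle. -/
def MGraph.IsTree {V : Type*} {n : ℕ} (ends : Fin n → Sym2 V) : Prop :=
  MGraph.Connected ends ∧ ¬ MGraph.HasCycle ends

/-- `(θ, φ)` witnesses that `f` lies in `End⁰(G)`. -/
def End0Data {n : ℕ} {T : Type*} [Group T] (θ : Fin n → Option (Fin n))
    (φ : Fin n → (T →* T)) (f : (Fin n → T) →* (Fin n → T)) : Prop :=
  (∀ i, (θ i).isSome → Function.Bijective (φ i)) ∧
    ∀ (x : Fin n → T) (i : Fin n), f x i = (θ i).elim 1 fun j => φ i (x j)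

namespace Ct


variable {n : ℕ} {β : Type*}

/-- Acyclicity of the decorated parent map. -/
def Good (q : Fin n → Option (Fin n × β)) : Prop :=
  ∃ d : Fin n → ℕ, ∀ j x, q j = some x → d x.1 < d j

def fsts : List (Option (Fin n × β)) → Finset (Fin n)
  | [] => ∅
  | e :: s => (e.elim ∅ fun x => {x.1}) ∪ fsts s

def parentSet (V : Finset (Fin n)) (q : Fin n → Option (Fin n × β)) : Finset (Fin n) :=
  V.biUnion fun j => (q j).elim ∅ fun x => {x.1}

def IsForest (V : Finset (Fin n)) (q : Fin n → Option (Fin n × β)) : Prop :=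
  (∀ j, q j ≠ none → j ∈ V) ∧ (∀ j x, q j = some x → x.1 ∈ V) ∧ Good q

lemma mem_elim_fsts {a : Fin n} {o : Option (Fin n × β)} :
    a ∈ o.elim (∅ : Finset (Fin n)) (fun x => {x.1}) ↔ ∃ b, o = some (a, b) := by
  cases o with
  | none => simp
  | some x => cases x with | mk c b => simp [eq_comm, and_comm, Prod.ext_iff]

lemma mem_parentSet {V : Finset (Fin n)} {q : Fin n → Option (Fin n × β)} {a : Fin n} :
    a ∈ parentSet V q ↔ ∃ j ∈ V, ∃ b, q j = some (a, b) := by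
  simp [parentSet, Finset.mem_biUnion, mem_elim_fsts]

lemma mem_fsts {c : List (Option (Fin n × β))} {a : Fin n} :
    a ∈ fsts c ↔ ∃ e ∈ c, ∃ b, e = some (a, b) := by
  induction c with
  | nil => simp [fsts]
  | cons e s ih =>
    simp [fsts, mem_elim_fsts, ih]
    exact ⟨fun h => h.elim (fun ⟨b, hb⟩ => ⟨b, Or.inl hb.symm⟩) (fun ⟨b, hb⟩ => ⟨b, Or.inr hb⟩),
      fun ⟨b, hb⟩ => hb.elim (fun h => Or.inl ⟨b, h.symm⟩) (fun h => Or.inr ⟨b, h⟩)⟩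

lemma card_fsts (c : List (Option (Fin n × β))) : (fsts c).card ≤ c.length := by
  induction c with
  | nil => simp [fsts]
  | cons e s ih =>
    refine le_trans (Finset.card_union_le _ _) ?_
    have : (e.elim (∅ : Finset (Fin n)) (fun x => {x.1})).card ≤ 1 := by
      cases e <;> simp
    calc (e.elim (∅ : Finset (Fin n)) (fun x => {x.1})).card + (fsts s).card
        ≤ 1 + s.length := Nat.add_le_add this ih
      _ = (e :: s).length := by simp [List.length_cons]; omega

variable [NeZero n]

def pick (S : Finset (Fin n)) : Fin n := WithTop.untopD ⟨0, Nat.pos_of_ne_zero (NeZero.ne n)⟩ S.min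

lemma pick_mem {S : Finset (Fin n)} (h : S.Nonempty) : pick S ∈ S := by
  have hm : S.min = (S.min' h : Fin n) := (Finset.coe_min' h).symm
  have : pick S = S.min' h := by rw [pick, hm]; rfl
  rw [this]
  exact Finset.min'_mem S h

def encodeAux : ℕ → Finset (Fin n) → (Fin n → Option (Fin n × β)) → List (Option (Fin n × β))
  | 0, _, _ => []
  | k+1, V, q =>
    if V.card ≤ 1 then []
    else
      let v := pick (V \ parentSet V q)
      q v :: encodeAux k (V.erase v) (Function.update q v none)

def decodeAux : Finset (Fin n) → List (Option (Fin n × β)) → Fin n → Option (Fin n × β)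
  | _, [] => fun _ => none
  | V, e :: s =>
    let w := pick (V \ fsts (e :: s))
    Function.update (decodeAux (V.erase w) s) w e

lemma exists_childfree {V : Finset (Fin n)} {q : Fin n → Option (Fin n × β)}
    (hF : IsForest V q) (hV : V.Nonempty) : (V \ parentSet V q).Nonempty := by
  obtain ⟨d, hd⟩ := hF.2.2
  obtain ⟨v, hvV, hvmax⟩ := Finset.exists_max_image V d hV
  refine ⟨v, Finset.mem_sdiff.2 ⟨hvV, ?_⟩⟩
  intro hv
  obtain ⟨j, hjV, b, hqj⟩ := mem_parentSet.1 hv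
  exact absurd (hvmax j hjV) (not_le.2 (hd j (v, b) hqj))

lemma parentSet_congr {V : Finset (Fin n)} {q q' : Fin n → Option (Fin n × β)}
    (h : ∀ j ∈ V, q j = q' j) : parentSet V q = parentSet V q' := by
  unfold parentSet
  exact Finset.biUnion_congr rfl (fun j hj => by rw [h j hj])

lemma parentSet_split {V : Finset (Fin n)} {q : Fin n → Option (Fin n × β)} {v : Fin n}
    (hv : v ∈ V) :
    parentSet V q = ((q v).elim ∅ fun x => {x.1}) ∪ parentSet (V.erase v) q := by
  unfold parentSet
  conv_lhs => rw [← Finset.insert_erase hv]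
  rw [Finset.biUnion_insert]

/-- Main encode specification, by induction on `k = V.card`. -/
lemma encode_spec : ∀ (k : ℕ) (V : Finset (Fin n)) (q : Fin n → Option (Fin n × β)),
    V.card = k → IsForest V q →
    (encodeAux k V q).length = V.card - 1 ∧
    fsts (encodeAux k V q) = parentSet V q ∧
    decodeAux V (encodeAux k V q) = q := by
  intro k
  induction k with
  | zero =>
    intro V q hcard hF
    have hV : V = ∅ := Finset.card_eq_zero.1 hcard
    have hq : ∀ j, q j = none := by
      intro j
      by_contra h
      have := hF.1 j h
      simp [hV] at this
    constructor
    · simp [encodeAux, hcard]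
    constructor
    · simp [encodeAux, fsts, hV, parentSet]
    · funext j
      simp [encodeAux, decodeAux, hq j]
  | succ k ih =>
    intro V q hcard hF
    by_cases h1 : V.card ≤ 1
    · -- V.card = 1
      have hk : k = 0 := by omega
      have hcard1 : V.card = 1 := by omega
      obtain ⟨v, hv⟩ := Finset.card_eq_one.1 hcard1
      obtain ⟨d, hd⟩ := hF.2.2
      have hq : ∀ j, q j = none := by
        intro j
        by_contra h
        have hjV := hF.1 j h
        rw [hv, Finset.mem_singleton] at hjV
        subst hjV
        obtain ⟨x, hx⟩ := Option.ne_none_iff_exists'.1 h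
        have hx1 : x.1 ∈ V := hF.2.1 j x hx
        rw [hv, Finset.mem_singleton] at hx1
        have := hd j x hx
        rw [hx1] at this
        omega
      have henc : encodeAux (k+1) V q = [] := by simp [encodeAux, h1]
      constructor
      · simp [henc, hcard1]
      constructor
      · rw [henc]
        have : parentSet V q = ∅ := by
          apply Finset.eq_empty_of_forall_notMem
          intro a ha
          obtain ⟨j, _, b, hqj⟩ := mem_parentSet.1 ha
          rw [hq j] at hqj; simp at hqj
        simp [fsts, this]
      · rw [henc]
        funext j
        simp [decodeAux, hq j]
    · -- V.card ≥ 2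
      push_neg at h1
      have hV : V.Nonempty := Finset.card_pos.1 (by omega)
      have hne := exists_childfree hF hV
      set v := pick (V \ parentSet V q) with hvdef
      have hvmem := pick_mem hne
      have hvV : v ∈ V := (Finset.mem_sdiff.1 hvmem).1
      have hvP : v ∉ parentSet V q := (Finset.mem_sdiff.1 hvmem).2
      set q' := Function.update q v none with hq'def
      set V' := V.erase v with hV'def
      have hcard' : V'.card = k := by rw [hV'def, Finset.card_erase_of_mem hvV]; omega
      have hqq' : ∀ j ∈ V', q j = q' j := by
        intro j hj
        rw [hq'def, Function.update_of_ne (Finset.ne_of_mem_erase hj)]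
      have hF' : IsForest V' q' := by
        refine ⟨?_, ?_, ?_⟩
        · intro j hj
          by_cases hjv : j = v
          · subst hjv; simp [hq'def] at hj
          · rw [hq'def, Function.update_of_ne hjv] at hj
            exact Finset.mem_erase.2 ⟨hjv, hF.1 j hj⟩
        · intro j x hx
          by_cases hjv : j = v
          · subst hjv; simp [hq'def] at hx
          · rw [hq'def, Function.update_of_ne hjv] at hx
            refine Finset.mem_erase.2 ⟨?_, hF.2.1 j x hx⟩
            intro hx1
            apply hvP
            exact mem_parentSet.2 ⟨j, hF.1 j (by rw [hx]; exact Option.some_ne_none x), x.2,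
              by rw [hx, ← hx1]⟩
        · obtain ⟨d, hd⟩ := hF.2.2
          refine ⟨d, fun j x hx => ?_⟩
          by_cases hjv : j = v
          · subst hjv; simp [hq'def] at hx
          · rw [hq'def, Function.update_of_ne hjv] at hx
            exact hd j x hx
      obtain ⟨ihlen, ihfsts, ihdec⟩ := ih V' q' hcard' hF'
      have henc : encodeAux (k+1) V q = q v :: encodeAux k V' q' := by
        rw [encodeAux]
        simp only [if_neg (by omega : ¬ V.card ≤ 1)]
        rfl
      have hfsts : fsts (encodeAux (k+1) V q) = parentSet V q := by
        rw [henc]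
        show ((q v).elim ∅ fun x => {x.1}) ∪ fsts (encodeAux k V' q') = _
        rw [ihfsts, ← parentSet_congr hqq', ← parentSet_split hvV]
      refine ⟨?_, hfsts, ?_⟩
      · rw [henc]; simp only [List.length_cons, ihlen, hcard']; omega
      · rw [henc]
        show Function.update
            (decodeAux (V.erase (pick (V \ fsts (q v :: encodeAux k V' q')))) (encodeAux k V' q'))
            (pick (V \ fsts (q v :: encodeAux k V' q'))) (q v) = q
        have hrw : fsts (q v :: encodeAux k V' q') = parentSet V q := by
          rw [← henc]; exact hfsts
        rw [hrw, ← hvdef, ← hV'def, ihdec, hq'def, Function.update_idem,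
          Function.update_eq_self]

lemma fsts_cons_subset {e : Option (Fin n × β)} {s : List (Option (Fin n × β))} :
    fsts s ⊆ fsts (e :: s) := by
  intro a ha; rw [fsts]; exact Finset.mem_union_right _ ha

/-- Main decode specification, by induction on the code. -/
lemma decode_spec : ∀ (c : List (Option (Fin n × β))) (V : Finset (Fin n)),
    (∀ e ∈ c, ∀ x : Fin n × β, e = some x → x.1 ∈ V) →
    c.length = V.card - 1 → V.Nonempty →
    IsForest V (decodeAux V c) ∧ parentSet V (decodeAux V c) = fsts c ∧
    encodeAux V.card V (decodeAux V c) = c := by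
  intro c
  induction c with
  | nil =>
    intro V hent hlen hV
    have hcard : V.card = 1 := by
      have := Finset.card_pos.2 hV
      simp at hlen; omega
    refine ⟨⟨by intro j h; simp [decodeAux] at h, by intro j x h; simp [decodeAux] at h,
        ⟨fun _ => 0, by intro j x h; simp [decodeAux] at h⟩⟩, ?_, ?_⟩
    · apply Finset.eq_empty_of_forall_notMem
      intro a ha
      obtain ⟨j, _, b, hqj⟩ := mem_parentSet.1 ha
      simp [decodeAux] at hqj
    · rw [hcard, encodeAux]
      simp [hcard]
  | cons e s ih =>
    intro V hent hlen hV
    have hcard : V.card = s.length + 2 := by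
      have := Finset.card_pos.2 hV
      simp at hlen; omega
    have hfscard : (fsts (e :: s)).card < V.card := by
      have := card_fsts (e :: s)
      simp at this; omega
    have hne : (V \ fsts (e :: s)).Nonempty := by
      rw [Finset.sdiff_nonempty]
      intro hsub
      exact absurd (Finset.card_le_card hsub) (not_le.2 hfscard)
    set w := pick (V \ fsts (e :: s)) with hwdef
    have hwmem := pick_mem hne
    have hwV : w ∈ V := (Finset.mem_sdiff.1 hwmem).1
    have hwF : w ∉ fsts (e :: s) := (Finset.mem_sdiff.1 hwmem).2
    set V' := V.erase w with hV'def
    have hcard' : V'.card = s.length + 1 := by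
      rw [hV'def, Finset.card_erase_of_mem hwV]; omega
    have hV' : V'.Nonempty := Finset.card_pos.1 (by omega)
    have hent' : ∀ e' ∈ s, ∀ x : Fin n × β, e' = some x → x.1 ∈ V' := by
      intro e' he' x hx
      refine Finset.mem_erase.2 ⟨?_, hent e' (List.mem_cons_of_mem e he') x hx⟩
      intro h
      apply hwF
      apply fsts_cons_subset
      exact mem_fsts.2 ⟨e', he', x.2, by rw [hx, ← h]⟩
    obtain ⟨⟨hsup', hpar', hgood'⟩, hps', henc'⟩ :=
      ih V' hent' (by omega) hV'
    set q' := decodeAux V' s with hq'def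
    have hq'w : q' w = none := by
      by_contra h
      have := hsup' w h
      exact absurd this (Finset.notMem_erase w V)
    have hdec : decodeAux V (e :: s) = Function.update q' w e := by
      rw [decodeAux]
    set q := Function.update q' w e with hqdef
    have hqw : q w = e := by rw [hqdef]; simp
    have hqj : ∀ j, j ≠ w → q j = q' j := fun j hj => by
      rw [hqdef, Function.update_of_ne hj]
    have hsup : ∀ j, q j ≠ none → j ∈ V := by
      intro j h
      by_cases hjw : j = w
      · subst hjw; exact hwV
      · rw [hqj j hjw] at h
        exact Finset.mem_of_mem_erase (hsup' j h)
    have hparents : ∀ j, ∀ x : Fin n × β, q j = some x → x.1 ∈ V := by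
      intro j x hx
      by_cases hjw : j = w
      · subst hjw; rw [hqw] at hx
        exact hent e (List.mem_cons_self) x hx
      · rw [hqj j hjw] at hx
        exact Finset.mem_of_mem_erase (hpar' j x hx)
    have hgood : Good q := by
      obtain ⟨d', hd'⟩ := hgood'
      set M := Finset.univ.sup d' with hM
      refine ⟨fun j => if j = w then M + 1 else d' j, ?_⟩
      intro j x hx
      by_cases hjw : j = w
      · subst hjw
        rw [hqw] at hx
        have hx1w : x.1 ≠ w := by
          intro h
          apply hwF
          exact mem_fsts.2 ⟨e, List.mem_cons_self, x.2, by rw [hx, ← h]⟩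
        simp only [if_neg hx1w, if_pos rfl]
        exact Nat.lt_succ_of_le (Finset.le_sup (Finset.mem_univ x.1))
      · rw [hqj j hjw] at hx
        have hx1 : x.1 ∈ fsts s := by
          rw [← hps']
          exact mem_parentSet.2 ⟨j, hsup' j (by rw [hx]; exact Option.some_ne_none x), x.2,
            by rw [hx]⟩
        have hx1w : x.1 ≠ w := by
          intro h
          exact hwF (fsts_cons_subset (h ▸ hx1))
        simp only [if_neg hx1w, if_neg hjw]
        exact hd' j x hx
    have hps : parentSet V q = fsts (e :: s) := by
      rw [parentSet_split hwV, hqw, ← hV'def]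
      have : parentSet V' q = parentSet V' q' :=
        parentSet_congr (fun j hj => hqj j (Finset.ne_of_mem_erase hj))
      rw [this, hps']
      rfl
    refine ⟨⟨hsup, hparents, hgood⟩, hps, ?_⟩
    -- encode round trip
    rw [hcard]
    show encodeAux (s.length + 1 + 1) V q = e :: s
    rw [encodeAux]
    simp only [if_neg (by omega : ¬ V.card ≤ 1)]
    rw [hps, ← hwdef, hqw, ← hV'def]
    have hupd : Function.update q w none = q' := by
      rw [hqdef, Function.update_idem, ← hq'w, Function.update_eq_self]
    rw [hupd, ← hcard', henc']

/-- The list/tuple equivalence. -/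
def listEquiv (γ : Type*) (m : ℕ) : {c : List γ // c.length = m} ≃ (Fin m → γ) where
  toFun c i := c.1.get (Fin.cast c.2.symm i)
  invFun f := ⟨List.ofFn f, List.length_ofFn⟩
  left_inv := by
    rintro ⟨c, rfl⟩
    apply Subtype.ext
    simp [List.ofFn_get]
  right_inv f := by
    funext i
    simp [List.get_ofFn]

lemma card_good (β : Type*) [Finite β] :
    Nat.card {q : Fin n → Option (Fin n × β) // Good q} =
      (n * Nat.card β + 1) ^ (n - 1) := by
  classical
  have e1 : {q : Fin n → Option (Fin n × β) // Good q} ≃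
      {q : Fin n → Option (Fin n × β) // IsForest Finset.univ q} :=
    Equiv.subtypeEquivRight (by
      intro q
      constructor
      · intro hg
        exact ⟨fun j _ => Finset.mem_univ j, fun j x _ => Finset.mem_univ x.1, hg⟩
      · intro hF; exact hF.2.2)
  have hcu : (Finset.univ : Finset (Fin n)).card = n := by simp
  have e2 : {q : Fin n → Option (Fin n × β) // IsForest Finset.univ q} ≃
      {c : List (Option (Fin n × β)) // c.length = n - 1} := by
    refine ⟨fun q => ⟨encodeAux (Finset.univ : Finset (Fin n)).card Finset.univ q.1, ?_⟩,
      fun c => ⟨decodeAux Finset.univ c.1, ?_⟩, ?_, ?_⟩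
    · rw [(encode_spec (Finset.univ : Finset (Fin n)).card Finset.univ q.1 rfl q.2).1, hcu]
    · exact (decode_spec c.1 Finset.univ (fun _ _ x _ => Finset.mem_univ x.1)
        (by rw [c.2, hcu]) Finset.univ_nonempty).1
    · intro q
      apply Subtype.ext
      exact (encode_spec (Finset.univ : Finset (Fin n)).card Finset.univ q.1 rfl q.2).2.2
    · intro c
      apply Subtype.ext
      exact (decode_spec c.1 Finset.univ (fun _ _ x _ => Finset.mem_univ x.1)
        (by rw [c.2, hcu]) Finset.univ_nonempty).2.2
  have e3 := listEquiv (Option (Fin n × β)) (n - 1)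
  letI := Fintype.ofFinite β
  have hopt : Nat.card (Option (Fin n × β)) = n * Nat.card β + 1 := by
    rw [Nat.card_eq_fintype_card, Nat.card_eq_fintype_card, Fintype.card_option,
      Fintype.card_prod, Fintype.card_fin]
  calc Nat.card {q : Fin n → Option (Fin n × β) // Good q}
      = Nat.card (Fin (n - 1) → Option (Fin n × β)) := Nat.card_congr (e1.trans (e2.trans e3))
    _ = (n * Nat.card β + 1) ^ (n - 1) := by
        rw [Nat.card_fun, hopt]
        simp [Nat.card_eq_fintype_card]



variable {n : ℕ}

abbrev Vtx (n : ℕ) := Option (Fin n)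

/-- Walks of given length to the root `none`. -/
def Wk (ends : Fin n → Sym2 (Vtx n)) : ℕ → Vtx n → Prop
  | 0, v => v = none
  | m+1, v => ∃ w, MGraph.Adj ends v w ∧ Wk ends m w

lemma adj_symm {ends : Fin n → Sym2 (Vtx n)} : Symmetric (MGraph.Adj ends) := by
  rintro a b ⟨i, hi⟩
  exact ⟨i, hi.trans Sym2.eq_swap⟩

lemma reach_exists_wk {ends : Fin n → Sym2 (Vtx n)} {v : Vtx n}
    (h : MGraph.Reach ends v none) : ∃ m, Wk ends m v := by
  induction h using Relation.ReflTransGen.head_induction_on with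
  | refl => exact ⟨0, rfl⟩
  | head hadj _ ih =>
    obtain ⟨m, hm⟩ := ih
    exact ⟨m + 1, _, hadj, hm⟩

/-- A spine: an edge-labelling permutation together with a parent map with
decreasing depth, realizing each edge as a (child, parent) pair. -/
structure IsSpine (ends : Fin n → Sym2 (Vtx n)) (σ : Equiv.Perm (Fin n))
    (p : Fin n → Option (Fin n)) (d : Fin n → ℕ) : Prop where
  ends_eq : ∀ j, ends (σ j) = s(some j, p j)
  dec : ∀ j j', p j = some j' → d j' < d j

/-- Depth lifted to vertices. -/
def DD (d : Fin n → ℕ) : Vtx n → ℕ := fun v => v.elim 0 fun j => d j + 1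

lemma DD_lt {ends σ p d} (hS : IsSpine (n := n) ends σ p d) (j : Fin n) :
    DD d (p j) < DD d (some j) := by
  cases hp : p j with
  | none => simp [DD]
  | some j' => simpa [DD] using hS.dec j j' hp

lemma p_ne_some {ends σ p d} (hS : IsSpine (n := n) ends σ p d) (j : Fin n) :
    p j ≠ some j := by
  intro h
  have := DD_lt hS j
  rw [h] at this
  omega

lemma spine_reach {ends σ p d} (hS : IsSpine (n := n) ends σ p d) :
    ∀ (m : ℕ) (v : Vtx n), DD d v ≤ m → MGraph.Reach ends v none := by
  intro m
  induction m with
  | zero =>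
    intro v hv
    cases v with
    | none => exact Relation.ReflTransGen.refl
    | some j => simp [DD] at hv
  | succ m ih =>
    intro v hv
    cases v with
    | none => exact Relation.ReflTransGen.refl
    | some j =>
      have hadj : MGraph.Adj ends (some j) (p j) := ⟨σ j, hS.ends_eq j⟩
      have hlt := DD_lt hS j
      refine Relation.ReflTransGen.head hadj (ih (p j) ?_)
      have hv' : DD d (some j) ≤ m + 1 := hv
      omega

lemma spine_connected {ends σ p d} (hS : IsSpine (n := n) ends σ p d) :
    MGraph.Connected ends := by
  intro a b
  have ha := spine_reach hS (DD d a) a le_rfl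
  have hb := spine_reach hS (DD d b) b le_rfl
  exact ha.trans ((@Relation.ReflTransGen.symmetric _ _ ⟨fun a b h => adj_symm h⟩).symm _ _ hb)

lemma spine_isTree {ends σ p d} (hS : IsSpine (n := n) ends σ p d) :
    MGraph.IsTree ends := by
  refine ⟨spine_connected hS, ?_⟩
  rintro ⟨m, e, v, he, hv, hev⟩
  obtain ⟨k, -, hk⟩ := Finset.exists_max_image Finset.univ (fun k => DD d (v k))
    ⟨0, Finset.mem_univ 0⟩
  have hmax : ∀ k', DD d (v k') ≤ DD d (v k) := fun k' => hk k' (Finset.mem_univ k')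
  -- analyze the edge e k
  set j1 := σ.symm (e k) with hj1
  have h1 : s(some j1, p j1) = s(v k, v (k + 1)) := by
    rw [← hev k, ← hS.ends_eq j1, hj1, Equiv.apply_symm_apply]
  have hA : some j1 = v k ∧ p j1 = v (k + 1) := by
    rcases Sym2.eq_iff.1 h1 with h | ⟨ha, hb⟩
    · exact h
    · exfalso
      have h1' : DD d (v k) < DD d (v (k + 1)) := by
        rw [← ha, ← hb]; exact DD_lt hS j1
      exact absurd (hmax (k + 1)) (not_le.2 h1')
  rcases Nat.eq_zero_or_pos m with hm | hm
  · -- loop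
    subst hm
    have : v (k + 1) = v k := congrArg v (by
      have h1 : k + 1 = (0 : Fin 1) := Fin.eq_zero _
      have h2 : k = (0 : Fin 1) := Fin.eq_zero _
      rw [h1, h2])
    rw [this, ← hA.1] at hA
    exact p_ne_some hS j1 hA.2
  · -- analyze the edge e (k - 1)
    set j2 := σ.symm (e (k - 1)) with hj2
    have h2 : s(some j2, p j2) = s(v (k - 1), v ((k - 1) + 1)) := by
      rw [← hev (k - 1), ← hS.ends_eq j2, hj2, Equiv.apply_symm_apply]
    rw [sub_add_cancel] at h2
    have hA2 : some j2 = v k := by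
      rcases Sym2.eq_iff.1 h2 with ⟨ha, hb⟩ | ⟨ha, hb⟩
      · exfalso
        have h2' : DD d (v k) < DD d (v (k - 1)) := by
          rw [← ha, ← hb]; exact DD_lt hS j2
        exact absurd (hmax (k - 1)) (not_le.2 h2')
      · exact ha
    have hj12 : j1 = j2 := by
      have := hA.1.trans hA2.symm
      exact Option.some_injective _ this
    have hee : e k = e (k - 1) := by
      have := congrArg σ (hj1.symm.trans (hj12.trans hj2))
      simpa [Equiv.apply_symm_apply] using this
    have hkk : k = k - 1 := he hee
    have h10 : (1 : Fin (m + 1)) = 0 := sub_eq_self.1 hkk.symm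
    have := Fin.one_eq_zero_iff.1 h10
    omega

/-- Intrinsic depth: minimal walk length to the root. -/
noncomputable def Dd (ends : Fin n → Sym2 (Vtx n)) (v : Vtx n) : ℕ :=
  sInf {m | Wk ends m v}

lemma spine_D_lt {ends σ p d} (hS : IsSpine (n := n) ends σ p d) (j : Fin n) :
    Dd ends (p j) < Dd ends (some j) := by
  have hex : ∀ v : Vtx n, ∃ m, Wk ends m v :=
    fun v => reach_exists_wk (spine_connected hS v none)
  have hwkD : ∀ v : Vtx n, Wk ends (Dd ends v) v := fun v => Nat.sInf_mem (hex v)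
  suffices H : ∀ t : ℕ, ∀ j : Fin n, Dd ends (some j) = t → Dd ends (p j) < t by
    exact H _ j rfl
  intro t
  induction t using Nat.strong_induction_on with
  | _ t ih =>
    intro j hgen
    have ht : Wk ends t (some j) := hgen ▸ hwkD (some j)
    cases t with
    | zero => exact absurd ht (by simp [Wk])
    | succ t' =>
      obtain ⟨w, ⟨i, hi⟩, hw⟩ := ht
      have hDw : Dd ends w ≤ t' := Nat.sInf_le hw
      set j2 := σ.symm i with hj2
      have hends : s(some j2, p j2) = s(some j, w) := by
        rw [← hi, ← hS.ends_eq j2, hj2, Equiv.apply_symm_apply]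
      rcases Sym2.eq_iff.1 hends with ⟨ha, hb⟩ | ⟨ha, hb⟩
      · have : j2 = j := Option.some_injective _ ha
        subst this
        rw [hb]
        omega
      · -- w = some j2 and p j2 = some j
        exfalso
        have h2 : Dd ends (some j2) ≤ t' := ha ▸ hDw
        have := ih (Dd ends (some j2)) (by omega) j2 rfl
        rw [hb] at this
        omega

lemma spine_unique {ends σ p d σ' p' d'} (hS : IsSpine (n := n) ends σ p d)
    (hS' : IsSpine ends σ' p' d') : σ = σ' ∧ p = p' := by
  have key : ∀ j, σ j = σ' j ∧ p j = p' j := by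
    intro j
    have h1 : s(some (σ.symm (σ' j)), p (σ.symm (σ' j))) = s(some j, p' j) := by
      rw [← hS'.ends_eq j, ← hS.ends_eq (σ.symm (σ' j)), Equiv.apply_symm_apply]
    rcases Sym2.eq_iff.1 h1 with ⟨ha, hb⟩ | ⟨ha, hb⟩
    · have hj : σ.symm (σ' j) = j := Option.some_injective _ ha
      constructor
      · conv_lhs => rw [← hj, Equiv.apply_symm_apply]
      · conv_lhs => rw [← hj]
        exact hb
    · exfalso
      have l1 := spine_D_lt hS (σ.symm (σ' j))
      rw [hb, ha] at l1
      have l2 := spine_D_lt hS' j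
      omega
  exact ⟨Equiv.ext fun j => (key j).1, funext fun j => (key j).2⟩

/-- Existence of a spine for a connected multigraph on `n+1` vertices with `n` edges. -/
lemma connected_spine {ends : Fin n → Sym2 (Vtx n)} (hc : MGraph.Connected ends) :
    ∃ (σ : Equiv.Perm (Fin n)) (p : Fin n → Option (Fin n)) (d : Fin n → ℕ),
      IsSpine ends σ p d := by
  have hex : ∀ v : Vtx n, ∃ m, Wk ends m v := fun v => reach_exists_wk (hc v none)
  have key : ∀ j : Fin n, ∃ (w : Vtx n) (i : Fin n),
      ends i = s(some j, w) ∧ Dd ends w < Dd ends (some j) := by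
    intro j
    have ht : Wk ends (Dd ends (some j)) (some j) := Nat.sInf_mem (hex (some j))
    cases hD : Dd ends (some j) with
    | zero => rw [hD] at ht; exact absurd ht (by simp [Wk])
    | succ m =>
      rw [hD] at ht
      obtain ⟨w, ⟨i, hi⟩, hw⟩ := ht
      exact ⟨w, i, hi, by
        have h1 : Dd ends w ≤ m := Nat.sInf_le (show m ∈ {m' | Wk ends m' w} from hw)
        omega⟩
  choose p σ0 hends hlt using key
  have hinj : Function.Injective σ0 := by
    intro j j' hjj
    by_contra hne
    have h1 : s(some j, p j) = s(some j', p j') := by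
      rw [← hends j, ← hends j', hjj]
    rcases Sym2.eq_iff.1 h1 with ⟨ha, hb⟩ | ⟨ha, hb⟩
    · exact hne (Option.some_injective _ ha)
    · have l1 := hlt j
      have l2 := hlt j'
      rw [hb] at l1
      rw [← ha] at l2
      omega
  refine ⟨Equiv.ofBijective σ0 (Finite.injective_iff_bijective.1 hinj), p,
    fun j => Dd ends (some j), ⟨fun j => hends j, fun j j' hp => ?_⟩⟩
  have := hlt j
  rw [hp] at this
  simpa using this



variable {n : ℕ} {T : Type*} [Group T]

/-- The endomorphism built from coordinate data. -/
def mkHom (θ : Fin n → Option (Fin n)) (α : Fin n → MulAut T) :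
    (Fin n → T) →* (Fin n → T) where
  toFun x i := (θ i).elim 1 fun j => α i (x j)
  map_one' := by
    funext i
    cases h : θ i <;> simp [h]
  map_mul' x y := by
    funext i
    cases h : θ i <;> simp [h]

lemma mkHom_apply (θ : Fin n → Option (Fin n)) (α : Fin n → MulAut T) (x : Fin n → T)
    (i : Fin n) : mkHom θ α x i = (θ i).elim 1 fun j => α i (x j) := rfl

lemma mkHom_end0 (θ : Fin n → Option (Fin n)) (α : Fin n → MulAut T) :
    End0Data θ (fun i => (α i : T →* T)) (mkHom θ α) :=
  ⟨fun i _ => (α i).bijective, fun x i => rfl⟩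

/-- Uniqueness of the data witnessing membership in `End⁰`. -/
lemma end0_unique [Nontrivial T] {θ θ' : Fin n → Option (Fin n)}
    {φ φ' : Fin n → (T →* T)} {f : (Fin n → T) →* (Fin n → T)}
    (h : End0Data θ φ f) (h' : End0Data θ' φ' f) :
    θ = θ' ∧ ∀ i j, θ i = some j → ∀ u : T, φ i u = φ' i u := by
  obtain ⟨t, ht⟩ := exists_ne (1 : T)
  have key : ∀ i, θ i = θ' i ∧ (∀ j, θ i = some j → ∀ u : T, φ i u = φ' i u) := by
    intro i
    cases hθ : θ i with
    | none =>
      cases hθ' : θ' i with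
      | none => exact ⟨rfl, fun j hj => absurd hj (by simp)⟩
      | some j' =>
        exfalso
        have e1 := h.2 (Pi.mulSingle j' t) i
        have e2 := h'.2 (Pi.mulSingle j' t) i
        rw [hθ] at e1
        rw [hθ'] at e2
        rw [e1] at e2
        simp only [Option.elim, Pi.mulSingle_eq_same] at e2
        have hbij := h'.1 i (by rw [hθ']; rfl)
        have : t = 1 := hbij.1 (by rw [← e2, map_one])
        exact ht this
    | some j =>
      have hbij := h.1 i (by rw [hθ]; rfl)
      cases hθ' : θ' i with
      | none =>
        exfalso
        have e1 := h.2 (Pi.mulSingle j t) i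
        have e2 := h'.2 (Pi.mulSingle j t) i
        rw [hθ] at e1
        rw [hθ'] at e2
        rw [e1] at e2
        simp only [Option.elim, Pi.mulSingle_eq_same] at e2
        have : t = 1 := hbij.1 (by rw [e2, map_one])
        exact ht this
      | some j' =>
        have hjj : j = j' := by
          by_contra hne
          have e1 := h.2 (Pi.mulSingle j t) i
          have e2 := h'.2 (Pi.mulSingle j t) i
          rw [hθ] at e1
          rw [hθ'] at e2
          rw [e1] at e2
          simp only [Option.elim, Pi.mulSingle_eq_same,
            Pi.mulSingle_eq_of_ne (Ne.symm hne), map_one] at e2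
          have : t = 1 := hbij.1 (by rw [e2, map_one])
          exact ht this
        subst hjj
        refine ⟨rfl, fun j0 hj0 u => ?_⟩
        have hj0' : j0 = j := (Option.some_injective _ hj0).symm
        subst hj0'
        have e1 := h.2 (Pi.mulSingle j0 u) i
        have e2 := h'.2 (Pi.mulSingle j0 u) i
        rw [hθ] at e1
        rw [hθ'] at e2
        rw [e1] at e2
        simpa only [Option.elim, Pi.mulSingle_eq_same] using e2
  exact ⟨funext fun i => (key i).1, fun i => (key i).2⟩

/-- Child/parent data extracted from a decorated parent map. -/
def par (q : Fin n → Option (Fin n × MulAut T)) (j : Fin n) : Option (Fin n) :=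
  (q j).map Prod.fst

def paut (q : Fin n → Option (Fin n × MulAut T)) (j : Fin n) : MulAut T :=
  ((q j).map Prod.snd).getD 1

def θF (o : Fin n → Bool) (σ : Equiv.Perm (Fin n)) (q : Fin n → Option (Fin n × MulAut T)) :
    Fin n → Option (Fin n) :=
  fun i => if o (σ.symm i) then some (σ.symm i) else par q (σ.symm i)

def θG (o : Fin n → Bool) (σ : Equiv.Perm (Fin n)) (q : Fin n → Option (Fin n × MulAut T)) :
    Fin n → Option (Fin n) :=
  fun i => if o (σ.symm i) then par q (σ.symm i) else some (σ.symm i)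

def αF (o : Fin n → Bool) (σ : Equiv.Perm (Fin n)) (α : Fin n → MulAut T)
    (q : Fin n → Option (Fin n × MulAut T)) : Fin n → MulAut T :=
  fun i => if o (σ.symm i) then α (σ.symm i) else paut q (σ.symm i)

def αG (o : Fin n → Bool) (σ : Equiv.Perm (Fin n)) (α : Fin n → MulAut T)
    (q : Fin n → Option (Fin n × MulAut T)) : Fin n → MulAut T :=
  fun i => if o (σ.symm i) then paut q (σ.symm i) else α (σ.symm i)

lemma ends_sigma (o : Fin n → Bool) (σ : Equiv.Perm (Fin n))
    (q : Fin n → Option (Fin n × MulAut T)) (j : Fin n) :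
    s(θF o σ q (σ j), θG o σ q (σ j)) = s(some j, par q j) := by
  simp only [θF, θG, Equiv.symm_apply_apply]
  cases o j <;> simp [Sym2.eq_swap]

lemma struct_spine (o : Fin n → Bool) (σ : Equiv.Perm (Fin n))
    {q : Fin n → Option (Fin n × MulAut T)} (hq : Good q) :
    ∃ d, IsSpine (fun i => s(θF o σ q i, θG o σ q i)) σ (par q) d := by
  obtain ⟨d, hd⟩ := hq
  refine ⟨d, ⟨fun j => ends_sigma o σ q j, fun j j' hp => ?_⟩⟩
  unfold par at hp
  cases hx : q j with
  | none => rw [hx] at hp; simp at hp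
  | some x =>
    rw [hx] at hp
    have : x.1 = j' := Option.some_injective _ (by simpa using hp)
    exact this ▸ hd j x hx

end Ct
namespace Ct

variable {n : ℕ} {T : Type*} [Group T]

/-- Structured data: orientations, edge labelling, child-side automorphisms,
and a decorated acyclic parent map. -/
abbrev St (n : ℕ) (T : Type*) [Group T] :=
  (Fin n → Bool) × Equiv.Perm (Fin n) × (Fin n → MulAut T) ×
    {q : Fin n → Option (Fin n × MulAut T) // Good q}

def Phi (s : St n T) :
    ((Fin n → T) →* (Fin n → T)) × ((Fin n → T) →* (Fin n → T)) :=
  (mkHom (θF s.1 s.2.1 s.2.2.2.1) (αF s.1 s.2.1 s.2.2.1 s.2.2.2.1),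
   mkHom (θG s.1 s.2.1 s.2.2.2.1) (αG s.1 s.2.1 s.2.2.1 s.2.2.2.1))

lemma phi_mem (s : St n T) :
    ∃ (θf θg : Fin n → Option (Fin n)) (φf φg : Fin n → (T →* T)),
      End0Data θf φf (Phi s).1 ∧ End0Data θg φg (Phi s).2 ∧
      MGraph.IsTree fun i => s(θf i, θg i) := by
  obtain ⟨o, σ, α, q, hq⟩ := s
  obtain ⟨d, hd⟩ := struct_spine o σ hq
  exact ⟨θF o σ q, θG o σ q, _, _, mkHom_end0 _ _, mkHom_end0 _ _, spine_isTree hd⟩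

lemma phi_inj [Nontrivial T] : Function.Injective (Phi (n := n) (T := T)) := by
  rintro ⟨o, σ, α, q, hq⟩ ⟨o', σ', α', q', hq'⟩ h
  have h1 : mkHom (θF o σ q) (αF o σ α q) = mkHom (θF o' σ' q') (αF o' σ' α' q') :=
    congrArg Prod.fst h
  have h2 : mkHom (θG o σ q) (αG o σ α q) = mkHom (θG o' σ' q') (αG o' σ' α' q') :=
    congrArg Prod.snd h
  have hfu := end0_unique (mkHom_end0 (θF o σ q) (αF o σ α q))
    (h1.symm ▸ mkHom_end0 (θF o' σ' q') (αF o' σ' α' q'))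
  have hgu := end0_unique (mkHom_end0 (θG o σ q) (αG o σ α q))
    (h2.symm ▸ mkHom_end0 (θG o' σ' q') (αG o' σ' α' q'))
  obtain ⟨d, hd⟩ := struct_spine o σ hq
  obtain ⟨d', hd'⟩ := struct_spine o' σ' hq'
  have hENDS : (fun i => s(θF o' σ' q' i, θG o' σ' q' i)) =
      (fun i => s(θF o σ q i, θG o σ q i)) := by
    rw [← hfu.1, ← hgu.1]
  rw [hENDS] at hd'
  obtain ⟨hσ, hpq⟩ := spine_unique hd hd'
  have hpne : ∀ j, par q j ≠ some j := p_ne_some hd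
  -- o = o'
  have ho : o = o' := by
    funext j
    have hθ := congrFun hfu.1 (σ j)
    have hθ' : (if o j then some j else par q j) = (if o' j then some j else par q' j) := by
      simpa [θF, Equiv.symm_apply_apply, hσ] using hθ
    rw [← hpq] at hθ'
    have hite : ∀ (b b' : Bool) (z : Option (Fin n)), z ≠ some j →
        (if b then some j else z) = (if b' then some j else z) → b = b' := by
      intro b b' z hz hbb
      cases b <;> cases b'
      · rfl
      · exact absurd (by simpa using hbb) hz
      · exact absurd (Eq.symm (by simpa using hbb)) hz
      · rfl
    exact hite (o j) (o' j) (par q j) (hpne j) hθ'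
  -- q = q'
  have hqq : q = q' := by
    funext j
    have hpar := congrFun hpq j
    cases hx : q j with
    | none =>
      cases hx' : q' j with
      | none => rfl
      | some x' =>
        exfalso
        rw [par, par, hx, hx'] at hpar
        simp at hpar
    | some x =>
      cases hx' : q' j with
      | none =>
        exfalso
        rw [par, par, hx, hx'] at hpar
        simp at hpar
      | some x' =>
        rw [par, par, hx, hx'] at hpar
        have hfst : x.1 = x'.1 := by simpa using hpar
        -- the decoration sits on the parent side
        have hsnd : x.2 = x'.2 := by
          cases hoj : o j with
          | true =>
            -- parent side is the g-side
            have hθg : θG o σ q (σ j) = some x.1 := by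
              simp [θG, Equiv.symm_apply_apply, hoj, par, hx]
            have hag := hgu.2 (σ j) x.1 hθg
            have e1 : αG o σ α q (σ j) = paut q j := by
              simp [αG, Equiv.symm_apply_apply, hoj]
            have e2 : αG o' σ' α' q' (σ j) = paut q' j := by
              rw [← hσ, ← ho]
              simp [αG, Equiv.symm_apply_apply, hoj]
            have : paut q j = paut q' j := by
              apply MulEquiv.ext
              intro u
              have := hag u
              rw [show ((fun i => (αG o σ α q i : T →* T)) (σ j)) u =
                  αG o σ α q (σ j) u from rfl] at this
              rw [show ((fun i => (αG o' σ' α' q' i : T →* T)) (σ j)) u =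
                  αG o' σ' α' q' (σ j) u from rfl] at this
              rw [e1, e2] at this
              exact this
            rw [paut, paut, hx, hx'] at this
            simpa using this
          | false =>
            have hθf : θF o σ q (σ j) = some x.1 := by
              simp [θF, Equiv.symm_apply_apply, hoj, par, hx]
            have haf := hfu.2 (σ j) x.1 hθf
            have e1 : αF o σ α q (σ j) = paut q j := by
              simp [αF, Equiv.symm_apply_apply, hoj]
            have e2 : αF o' σ' α' q' (σ j) = paut q' j := by
              rw [← hσ, ← ho]
              simp [αF, Equiv.symm_apply_apply, hoj]
            have : paut q j = paut q' j := by
              apply MulEquiv.ext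
              intro u
              have := haf u
              rw [show ((fun i => (αF o σ α q i : T →* T)) (σ j)) u =
                  αF o σ α q (σ j) u from rfl] at this
              rw [show ((fun i => (αF o' σ' α' q' i : T →* T)) (σ j)) u =
                  αF o' σ' α' q' (σ j) u from rfl] at this
              rw [e1, e2] at this
              exact this
            rw [paut, paut, hx, hx'] at this
            simpa using this
        exact congrArg some (Prod.ext hfst hsnd)
  -- α = α'
  have hα : α = α' := by
    funext j
    cases hoj : o j with
    | true =>
      have hθf : θF o σ q (σ j) = some j := by
        simp [θF, Equiv.symm_apply_apply, hoj]
      have haf := hfu.2 (σ j) j hθf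
      apply MulEquiv.ext
      intro u
      have := haf u
      have e1 : αF o σ α q (σ j) = α j := by
        simp [αF, Equiv.symm_apply_apply, hoj]
      have e2 : αF o' σ' α' q' (σ j) = α' j := by
        rw [← hσ, ← ho]
        simp [αF, Equiv.symm_apply_apply, hoj]
      rw [show ((fun i => (αF o σ α q i : T →* T)) (σ j)) u =
          αF o σ α q (σ j) u from rfl] at this
      rw [show ((fun i => (αF o' σ' α' q' i : T →* T)) (σ j)) u =
          αF o' σ' α' q' (σ j) u from rfl] at this
      rw [e1, e2] at this
      exact this
    | false =>
      have hθg : θG o σ q (σ j) = some j := by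
        simp [θG, Equiv.symm_apply_apply, hoj]
      have hag := hgu.2 (σ j) j hθg
      apply MulEquiv.ext
      intro u
      have := hag u
      have e1 : αG o σ α q (σ j) = α j := by
        simp [αG, Equiv.symm_apply_apply, hoj]
      have e2 : αG o' σ' α' q' (σ j) = α' j := by
        rw [← hσ, ← ho]
        simp [αG, Equiv.symm_apply_apply, hoj]
      rw [show ((fun i => (αG o σ α q i : T →* T)) (σ j)) u =
          αG o σ α q (σ j) u from rfl] at this
      rw [show ((fun i => (αG o' σ' α' q' i : T →* T)) (σ j)) u =
          αG o' σ' α' q' (σ j) u from rfl] at this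
      rw [e1, e2] at this
      exact this
  subst ho hσ hα
  exact congrArg (fun z => (o, σ, α, z)) (Subtype.ext hqq)

end Ct
namespace Ct

variable {n : ℕ} {T : Type*} [Group T]

lemma phi_surj (f g : (Fin n → T) →* (Fin n → T)) (θf θg : Fin n → Option (Fin n))
    (φf φg : Fin n → (T →* T)) (hf : End0Data θf φf f) (hg : End0Data θg φg g)
    (ht : MGraph.IsTree fun i => s(θf i, θg i)) :
    ∃ s : St n T, Phi s = (f, g) := by
  classical
  obtain ⟨σ, p, d, hS⟩ := connected_spine ht.1
  have hpne : ∀ j, p j ≠ some j := p_ne_some hS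
  have hcase : ∀ j, (θf (σ j) = some j ∧ θg (σ j) = p j) ∨
      (θf (σ j) = p j ∧ θg (σ j) = some j) := fun j => Sym2.eq_iff.1 (hS.ends_eq j)
  set o : Fin n → Bool := fun j => decide (θf (σ j) = some j) with ho
  set autf : Fin n → MulAut T :=
    fun i => if h : (θf i).isSome then MulEquiv.ofBijective (φf i) (hf.1 i h) else 1
    with hautf
  set autg : Fin n → MulAut T :=
    fun i => if h : (θg i).isSome then MulEquiv.ofBijective (φg i) (hg.1 i h) else 1
    with hautg
  have hautf_apply : ∀ (i : Fin n), (θf i).isSome → ∀ u : T, autf i u = φf i u := by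
    intro i h u
    rw [hautf]
    simp only [dif_pos h]
    rfl
  have hautg_apply : ∀ (i : Fin n), (θg i).isSome → ∀ u : T, autg i u = φg i u := by
    intro i h u
    rw [hautg]
    simp only [dif_pos h]
    rfl
  set q : Fin n → Option (Fin n × MulAut T) :=
    fun j => (p j).map fun j' => (j', if o j then autg (σ j) else autf (σ j)) with hqd
  have hGood : Good q := by
    refine ⟨d, fun j x hx => ?_⟩
    simp only [hqd] at hx
    cases hp : p j with
    | none => rw [hp] at hx; simp at hx
    | some j' =>
      rw [hp] at hx
      have hx1 : x.1 = j' := by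
        have := Option.some_injective _ hx
        rw [← this]
      rw [hx1]
      exact hS.dec j j' hp
  have hpar : par q = p := by
    funext j
    cases hp : p j <;> simp [par, hqd, hp]
  -- case facts per j
  have hOT : ∀ j, o j = true → θf (σ j) = some j := by
    intro j hj
    rw [ho] at hj
    exact of_decide_eq_true hj
  have hOF : ∀ j, o j = false → θf (σ j) = p j ∧ θg (σ j) = some j := by
    intro j hj
    rcases hcase j with ⟨h1, h2⟩ | h
    · exfalso
      rw [ho] at hj
      rw [decide_eq_false_iff_not] at hj
      exact hj h1
    · exact h
  have hTT : ∀ j, o j = true → θg (σ j) = p j := by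
    intro j hj
    rcases hcase j with ⟨h1, h2⟩ | ⟨h1, h2⟩
    · exact h2
    · -- θf (σ j) = p j and also = some j
      have := hOT j hj
      rw [this] at h1
      exact absurd h1.symm (hpne j)
  -- θ identification
  have hθF : θF o σ q = θf := by
    funext i
    have hi : σ (σ.symm i) = i := σ.apply_symm_apply i
    show (if o (σ.symm i) then some (σ.symm i) else par q (σ.symm i)) = θf i
    cases hoj : o (σ.symm i) with
    | true =>
      have := hOT _ hoj
      rw [hi] at this
      simp [this]
    | false =>
      have := (hOF _ hoj).1
      rw [hi] at this
      simp [hpar, this]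
  have hθG : θG o σ q = θg := by
    funext i
    have hi : σ (σ.symm i) = i := σ.apply_symm_apply i
    show (if o (σ.symm i) then par q (σ.symm i) else some (σ.symm i)) = θg i
    cases hoj : o (σ.symm i) with
    | true =>
      have := hTT _ hoj
      rw [hi] at this
      simp [hpar, this]
    | false =>
      have := (hOF _ hoj).2
      rw [hi] at this
      simp [this]
  set α : Fin n → MulAut T := fun j => if o j then autf (σ j) else autg (σ j) with hα
  -- f identification
  have hF : mkHom (θF o σ q) (αF o σ α q) = f := by
    apply MonoidHom.ext
    intro x
    funext i
    rw [mkHom_apply, hθF, hf.2 x i]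
    cases hθ : θf i with
    | none => rfl
    | some j' =>
      simp only [Option.elim]
      have hsome : (θf i).isSome := by rw [hθ]; rfl
      have hi : σ (σ.symm i) = i := σ.apply_symm_apply i
      have hval : ∀ u : T, αF o σ α q i u = φf i u := by
        intro u
        show (if o (σ.symm i) then α (σ.symm i) else paut q (σ.symm i)) u = φf i u
        cases hoj : o (σ.symm i) with
        | true =>
          simp only [if_pos rfl]
          rw [hα]
          simp only [hoj, if_pos rfl, hi]
          exact hautf_apply i hsome u
        | false =>
          simp only [Bool.false_eq_true, if_false]
          have hpj : p (σ.symm i) = some j' := by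
            have := (hOF _ hoj).1
            rw [hi] at this
            rw [← this, hθ]
          have hpaut : paut q (σ.symm i) = autf i := by
            simp only [paut, hqd, hpj, Option.map_some]
            simp [hoj, hi]
          rw [hpaut]
          exact hautf_apply i hsome u
      exact hval (x j')
  -- g identification
  have hG : mkHom (θG o σ q) (αG o σ α q) = g := by
    apply MonoidHom.ext
    intro x
    funext i
    rw [mkHom_apply, hθG, hg.2 x i]
    cases hθ : θg i with
    | none => rfl
    | some j' =>
      simp only [Option.elim]
      have hsome : (θg i).isSome := by rw [hθ]; rfl
      have hi : σ (σ.symm i) = i := σ.apply_symm_apply i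
      have hval : ∀ u : T, αG o σ α q i u = φg i u := by
        intro u
        show (if o (σ.symm i) then paut q (σ.symm i) else α (σ.symm i)) u = φg i u
        cases hoj : o (σ.symm i) with
        | true =>
          simp only [if_pos rfl]
          have hpj : p (σ.symm i) = some j' := by
            have := hTT _ hoj
            rw [hi] at this
            rw [← this, hθ]
          have hpaut : paut q (σ.symm i) = autg i := by
            simp only [paut, hqd, hpj, Option.map_some]
            simp [hoj, hi]
          rw [hpaut]
          exact hautg_apply i hsome u
        | false =>
          simp only [Bool.false_eq_true, if_false]
          rw [hα]
          simp only [hoj, Bool.false_eq_true, if_false, hi]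
          exact hautg_apply i hsome u
      exact hval (x j')
  refine ⟨(o, σ, α, ⟨q, hGood⟩), ?_⟩
  rw [Phi]
  exact Prod.ext hF hG

end Ct

theorem count_tree_pairs
    (n : ℕ) (hn : 1 ≤ n) (T : Type*) [Group T] [Finite T] [Nontrivial T] :
    Nat.card {fg : ((Fin n → T) →* (Fin n → T)) × ((Fin n → T) →* (Fin n → T)) //
        ∃ (θf θg : Fin n → Option (Fin n)) (φf φg : Fin n → (T →* T)),
          End0Data θf φf fg.1 ∧ End0Data θg φg fg.2 ∧
          MGraph.IsTree fun i => s(θf i, θg i)} =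
      2 ^ n * Nat.factorial n * Nat.card (MulAut T) ^ n *
        (n * Nat.card (MulAut T) + 1) ^ (n - 1) := by
  classical
  haveI : NeZero n := ⟨by omega⟩
  haveI : Finite (MulAut T) :=
    Finite.of_injective (fun e => (e : T ≃ T))
      (fun a b hab => by ext t; exact congrArg (fun (e : T ≃ T) => e t) hab)
  have key : Nat.card {fg : ((Fin n → T) →* (Fin n → T)) × ((Fin n → T) →* (Fin n → T)) //
        ∃ (θf θg : Fin n → Option (Fin n)) (φf φg : Fin n → (T →* T)),
          End0Data θf φf fg.1 ∧ End0Data θg φg fg.2 ∧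
          MGraph.IsTree fun i => s(θf i, θg i)} = Nat.card (Ct.St n T) := by
    refine (Nat.card_congr (Equiv.ofBijective
      (fun s => ⟨Ct.Phi s, Ct.phi_mem s⟩) ⟨?_, ?_⟩)).symm
    · intro a b hab
      exact Ct.phi_inj (congrArg Subtype.val hab)
    · rintro ⟨⟨f, g⟩, θf, θg, φf, φg, hf, hg, ht⟩
      obtain ⟨s, hs⟩ := Ct.phi_surj f g θf θg φf φg hf hg ht
      exact ⟨s, Subtype.ext hs⟩
  rw [key, Nat.card_prod, Nat.card_prod, Nat.card_prod, Ct.card_good (MulAut T),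
    Nat.card_fun, Nat.card_fun]
  have h1 : Nat.card Bool = 2 := by rw [Nat.card_eq_fintype_card, Fintype.card_bool]
  have h2 : Nat.card (Fin n) = n := by rw [Nat.card_eq_fintype_card, Fintype.card_fin]
  have h3 : Nat.card (Equiv.Perm (Fin n)) = n.factorial := by
    rw [Nat.card_eq_fintype_card, Fintype.card_perm, Fintype.card_fin]
  rw [h1, h2, h3]
  ring
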